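/- Suppose loss : ℝ → ℝ is convex and Lipschitz with argmin loss = {0}, δ > 1, and P(Z ≠ 0) > 0. Then there exist positive constants C₁ and C₂, depending only on loss, the law of Z, and δ, such that Lcal(v) ≥ C₁·‖v‖ − C₂ for every v ∈ H with Gcal(v) ≤ 0. -/

import Mathlib

open MeasureTheory ProbabilityTheory Real Set Filter
open scoped NNReal ENNReal Topology

noncomputable section

/-- Subdifferential of a function `f : ℝ → ℝ` at `x`. -/
def subderiv (f : ℝ → ℝ) (x : ℝ) : Set ℝ :=
  {g : ℝ | ∀ y : ℝ, f x + g * (y - x) ≤ f y}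

/-- Moreau envelope `env_f(x; τ)`. -/
def moreau (f : ℝ → ℝ) (τ x : ℝ) : ℝ :=
  ⨅ u : ℝ, ((x - u) ^ 2 / (2 * τ) + f u)

/-- Proximal operator `prox[τ·f](x)`, the minimizer of `u ↦ τ f(u) + (x-u)²/2`. -/
def prox (τ : ℝ) (f : ℝ → ℝ) (x : ℝ) : ℝ :=
  Classical.epsilon fun u : ℝ =>
    ∀ y : ℝ, τ * f u + (x - u) ^ 2 / 2 ≤ τ * f y + (x - y) ^ 2 / 2

/-- Joint law of `(G, W)` where `G ~ N(0,1)` is independent of `W ~ ζ`. -/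
def nu (ζ : Measure ℝ) : Measure (ℝ × ℝ) :=
  (gaussianReal 0 1).prod ζ

/-- The set of global minimizers of `f` is `{0}`. -/
def argminIsZero (f : ℝ → ℝ) : Prop :=
  {x : ℝ | ∀ y : ℝ, f x ≤ f y} = {0}

/-- `f` is Lipschitz. -/
def LipschitzFun (f : ℝ → ℝ) : Prop := ∃ K : NNReal, LipschitzWith K f

/-- `L(c, τ) = E[env_loss(c·G + Z; τ) − loss(Z)]`. -/
def Lfun (ζ : Measure ℝ) (loss : ℝ → ℝ) (c τ : ℝ) : ℝ :=
  ∫ p : ℝ × ℝ, (moreau loss τ (c * p.1 + p.2) - loss p.2) ∂(nu ζ)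

/-- Unregularized potential `M(α)`. -/
def Mpot (ζ : Measure ℝ) (loss : ℝ → ℝ) (δ α : ℝ) : ℝ :=
  ⨆ β : Ioi (0:ℝ), ⨅ τg : Ioi (0:ℝ),
    ((β : ℝ) * (τg : ℝ) / (2 * δ) + Lfun ζ loss α ((τg : ℝ) / (β : ℝ)) - α * (β : ℝ) / δ)

/-- Membership in the Hilbert space `H` of square integrable functions of `(G, Z)`. -/
def inH (ζ : Measure ℝ) (v : ℝ × ℝ → ℝ) : Prop :=
  MemLp v 2 (nu ζ)

/-- Hilbert norm `‖v‖ = E[v²]^{1/2}`. -/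
def hnorm (ζ : Measure ℝ) (v : ℝ × ℝ → ℝ) : ℝ :=
  Real.sqrt (∫ p : ℝ × ℝ, (v p) ^ 2 ∂(nu ζ))

/-- `Lcal(v) = E[loss(v + Z) − loss(Z)]`. -/
def Lcal (ζ : Measure ℝ) (loss : ℝ → ℝ) (v : ℝ × ℝ → ℝ) : ℝ :=
  ∫ p : ℝ × ℝ, (loss (v p + p.2) - loss p.2) ∂(nu ζ)

/-- `Gcal(v) = ‖v‖ − E[v·G]/√(1 − δ⁻¹)`. -/
def Gcal (ζ : Measure ℝ) (δ : ℝ) (v : ℝ × ℝ → ℝ) : ℝ :=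
  hnorm ζ v - (∫ p : ℝ × ℝ, v p * p.1 ∂(nu ζ)) / Real.sqrt (1 - δ⁻¹)

/-- `v` solves `min_{v ∈ H, Gcal(v) ≤ 0} Lcal(v)`. -/
def SolvesConstrained (ζ : Measure ℝ) (loss : ℝ → ℝ) (δ : ℝ) (v : ℝ × ℝ → ℝ) : Prop :=
  inH ζ v ∧ Gcal ζ δ v ≤ 0 ∧
    ∀ u : ℝ × ℝ → ℝ, inH ζ u → Gcal ζ δ u ≤ 0 → Lcal ζ loss v ≤ Lcal ζ loss u

/-- Subdifferential of a functional `F : H → ℝ` at `v`, as a subset of `H`. -/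
def subdiffH (ζ : Measure ℝ) (F : (ℝ × ℝ → ℝ) → ℝ) (v : ℝ × ℝ → ℝ) : Set (ℝ × ℝ → ℝ) :=
  {g | inH ζ g ∧ ∀ u : ℝ × ℝ → ℝ, inH ζ u →
    F v + ∫ p : ℝ × ℝ, g p * (u p - v p) ∂(nu ζ) ≤ F u}

/-- KKT condition at `v` with multiplier `μ`:
`(−μ)·∂Gcal(v) ∩ ∂Lcal(v) ≠ ∅`, `μ·Gcal(v) = 0`, `Gcal(v) ≤ 0`. -/
def KKT (ζ : Measure ℝ) (loss : ℝ → ℝ) (δ μ : ℝ) (v : ℝ × ℝ → ℝ) : Prop :=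
  (∃ h ∈ subdiffH ζ (Gcal ζ δ) v, (fun p => -μ * h p) ∈ subdiffH ζ (Lcal ζ loss) v) ∧
    μ * Gcal ζ δ v = 0 ∧ Gcal ζ δ v ≤ 0

/-- The two-equation nonlinear system with unknowns `(α, κ)`. -/
def solvesSystem (ζ : Measure ℝ) (loss : ℝ → ℝ) (δ α κ : ℝ) : Prop :=
  α ^ 2 = δ * ∫ p : ℝ × ℝ,
      ((α * p.1 + p.2) - prox κ loss (α * p.1 + p.2)) ^ 2 ∂(nu ζ) ∧
  α = δ * ∫ p : ℝ × ℝ,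
      ((α * p.1 + p.2) - prox κ loss (α * p.1 + p.2)) * p.1 ∂(nu ζ)

/-- Threshold `δ_perfect = 1/(1 − inf_{t>0} E[dist(G, t·∂loss(Z))²])₊ ∈ (0, ∞]`. -/
def deltaPerfect (ζ : Measure ℝ) (loss : ℝ → ℝ) : ENNReal :=
  1 / ENNReal.ofReal
    (1 - ⨅ t : Ioi (0:ℝ),
      ∫ p : ℝ × ℝ, (Metric.infDist p.1 ((fun g => (t : ℝ) * g) '' subderiv loss p.2)) ^ 2 ∂(nu ζ))

/- ### Auxiliary lemmas -/

lemma gauss_sq_integrable : Integrable (fun x : ℝ => x ^ 2) (gaussianReal 0 1) := by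
  rw [gaussianReal_of_var_ne_zero 0 one_ne_zero]
  rw [integrable_withDensity_iff (measurable_gaussianPDF 0 1)
    (Eventually.of_forall fun x => ENNReal.ofReal_lt_top)]
  have hfun : (fun x : ℝ => x ^ 2 * (gaussianPDF 0 1 x).toReal)
      = fun x : ℝ => (√(2 * π))⁻¹ * (x ^ (2:ℝ) * rexp (-2⁻¹ * x ^ 2)) := by
    funext x
    rw [gaussianPDF, ENNReal.toReal_ofReal (gaussianPDFReal_nonneg 0 1 x), gaussianPDFReal]
    have h2 : x ^ (2:ℝ) = x ^ (2:ℕ) := by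
      rw [show (2:ℝ) = ((2:ℕ):ℝ) by norm_num, Real.rpow_natCast]
    rw [h2]
    push_cast
    ring_nf
  rw [hfun]
  exact (integrable_rpow_mul_exp_neg_mul_sq (by norm_num : (0:ℝ) < 2⁻¹)
    (by norm_num : (-1:ℝ) < 2)).const_mul _

lemma lossLB (loss : ℝ → ℝ) (hconv : ConvexOn ℝ Set.univ loss) (hmin : argminIsZero loss) :
    ∃ c : ℝ, 0 < c ∧ ∀ x : ℝ, loss 0 + c * (|x| - 1) ≤ loss x := by
  have h0 : ∀ y, loss 0 ≤ loss y := by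
    have : (0:ℝ) ∈ {x : ℝ | ∀ y : ℝ, loss x ≤ loss y} := by
      rw [hmin]; exact Set.mem_singleton 0
    exact this
  have hne : ∀ z : ℝ, z ≠ 0 → loss 0 < loss z := by
    intro z hz
    rcases lt_or_eq_of_le (h0 z) with h | h
    · exact h
    · exfalso
      have : z ∈ {x : ℝ | ∀ y : ℝ, loss x ≤ loss y} := fun y => h ▸ h0 y
      rw [hmin] at this
      exact hz this
  set c : ℝ := min (loss 1 - loss 0) (loss (-1) - loss 0) with hc_def
  have hc : 0 < c := lt_min (by linarith [hne 1 one_ne_zero])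
    (by linarith [hne (-1) (by norm_num)])
  refine ⟨c, hc, fun x => ?_⟩
  rcases le_or_gt (|x|) 1 with hx | hx
  · nlinarith [h0 x, abs_nonneg x]
  rcases lt_or_ge 1 x with hx1 | hx1
  · have hx0 : (0:ℝ) < x := by linarith
    have ha : (0:ℝ) ≤ 1 - x⁻¹ := by
      have : x⁻¹ ≤ 1 := by rw [inv_le_one_iff₀]; right; linarith
      linarith
    have hb : (0:ℝ) ≤ x⁻¹ := by positivity
    have hab : (1 - x⁻¹) + x⁻¹ = 1 := by ring
    have key := hconv.2 (Set.mem_univ (0:ℝ)) (Set.mem_univ x) ha hb hab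
    simp only [smul_eq_mul, mul_zero, zero_add] at key
    have hxx : x⁻¹ * x = 1 := inv_mul_cancel₀ (ne_of_gt hx0)
    rw [hxx] at key
    have key2 : x * loss 1 ≤ x * ((1 - x⁻¹) * loss 0 + x⁻¹ * loss x) :=
      mul_le_mul_of_nonneg_left key (le_of_lt hx0)
    have key3 : x * loss 1 ≤ (x - 1) * loss 0 + loss x := by
      have : x * ((1 - x⁻¹) * loss 0 + x⁻¹ * loss x) = (x - 1) * loss 0 + loss x := by
        field_simp
      linarith [this ▸ key2]
    have habs : |x| = x := abs_of_pos hx0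
    rw [habs]
    have hc1 : c ≤ loss 1 - loss 0 := min_le_left _ _
    nlinarith
  · have hxneg : x < -1 := by
      rcases abs_cases x with ⟨h1, _⟩ | ⟨h1, _⟩ <;> linarith
    have hx0 : x < 0 := by linarith
    have hy0 : (0:ℝ) < -x := by linarith
    have ha : (0:ℝ) ≤ 1 + x⁻¹ := by
      have h1 : -x⁻¹ = (-x)⁻¹ := by rw [inv_neg]
      have h2 : (1:ℝ) ≤ -x := by linarith
      have h3 : (-x)⁻¹ ≤ 1 := inv_le_one_of_one_le₀ h2
      have h4 : -x⁻¹ ≤ 1 := by rw [h1]; exact h3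
      linarith
    have hb : (0:ℝ) ≤ -x⁻¹ := by
      have : x⁻¹ ≤ 0 := inv_nonpos.2 (le_of_lt hx0)
      linarith
    have hab : (1 + x⁻¹) + -x⁻¹ = 1 := by ring
    have key := hconv.2 (Set.mem_univ (0:ℝ)) (Set.mem_univ x) ha hb hab
    simp only [smul_eq_mul, mul_zero, zero_add] at key
    have hxx : -x⁻¹ * x = -1 := by
      rw [neg_mul, inv_mul_cancel₀ (ne_of_lt hx0)]
    rw [hxx] at key
    have key2 : (-x) * loss (-1) ≤ (-x) * ((1 + x⁻¹) * loss 0 + -x⁻¹ * loss x) :=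
      mul_le_mul_of_nonneg_left key (le_of_lt hy0)
    have key3 : (-x) * loss (-1) ≤ (-x - 1) * loss 0 + loss x := by
      have : (-x) * ((1 + x⁻¹) * loss 0 + -x⁻¹ * loss x) = (-x - 1) * loss 0 + loss x := by
        have hxi : x * x⁻¹ = 1 := mul_inv_cancel₀ (ne_of_lt hx0)
        linear_combination (loss x - loss 0) * hxi
      linarith [this ▸ key2]
    have habs : |x| = -x := abs_of_neg hx0
    rw [habs]
    have hc1 : c ≤ loss (-1) - loss 0 := min_le_right _ _
    nlinarith

lemma my_cs {α : Type*} [MeasurableSpace α] (μ : Measure α) (f g : α → ℝ)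
    (hf0 : ∀ x, 0 ≤ f x) (hg0 : ∀ x, 0 ≤ g x)
    (hf : MemLp f 2 μ) (hg : MemLp g 2 μ) :
    ∫ a, f a * g a ∂μ ≤ Real.sqrt (∫ a, f a ^ 2 ∂μ) * Real.sqrt (∫ a, g a ^ 2 ∂μ) := by
  have h2 : ENNReal.ofReal (2:ℝ) = 2 := by norm_num
  have hpq : Real.HolderConjugate 2 2 := ⟨by norm_num, by norm_num, by norm_num⟩
  have := integral_mul_le_Lp_mul_Lq_of_nonneg hpq (Eventually.of_forall hf0)
    (Eventually.of_forall hg0) (h2 ▸ hf) (h2 ▸ hg)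
  have hrw : ∀ h : α → ℝ, (∫ a, h a ^ (2:ℝ) ∂μ) = ∫ a, h a ^ (2:ℕ) ∂μ := by
    intro h
    congr 1
    funext a
    rw [show (2:ℝ) = ((2:ℕ):ℝ) by norm_num, Real.rpow_natCast]
  rw [hrw f, hrw g] at this
  calc ∫ a, f a * g a ∂μ ≤ (∫ a, f a ^ 2 ∂μ) ^ (1/2:ℝ) * (∫ a, g a ^ 2 ∂μ) ^ (1/2:ℝ) := this
    _ = _ := by rw [← Real.sqrt_eq_rpow, ← Real.sqrt_eq_rpow]

lemma tail_small {μ : Measure ℝ} [IsProbabilityMeasure μ] (f : ℝ → ℝ) (hf : Integrable f μ) :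
    Tendsto (fun n : ℕ => ∫ x in (Metric.closedBall (0:ℝ) n)ᶜ, f x ∂μ) atTop (𝓝 0) := by
  set s : ℕ → Set ℝ := fun n => Metric.closedBall (0:ℝ) n with hs_def
  have hsm : ∀ n, MeasurableSet (s n) := fun n => Metric.isClosed_closedBall.measurableSet
  have hmono : Monotone s := fun m n hmn =>
    Metric.closedBall_subset_closedBall (by exact_mod_cast hmn)
  have hunion : (⋃ n, s n) = Set.univ := by
    apply Set.eq_univ_iff_forall.2
    intro x
    obtain ⟨n, hn⟩ := exists_nat_ge (|x|)
    exact Set.mem_iUnion.2 ⟨n, by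
      simp only [s, Metric.mem_closedBall, Real.dist_eq, sub_zero]; exact hn⟩
  have hfi : IntegrableOn f (⋃ n, s n) μ := by
    rw [hunion]; exact hf.integrableOn
  have htend := tendsto_setIntegral_of_monotone hsm hmono hfi
  rw [hunion] at htend
  have heq : ∀ n : ℕ, ∫ x in (s n)ᶜ, f x ∂μ = (∫ x, f x ∂μ) - ∫ x in s n, f x ∂μ := by
    intro n
    have := integral_add_compl (hsm n) hf
    linarith
  show Tendsto (fun n : ℕ => ∫ x in (s n)ᶜ, f x ∂μ) atTop (𝓝 0)
  simp only [heq]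
  have : Tendsto (fun n : ℕ => (∫ x, f x ∂μ) - ∫ x in s n, f x ∂μ) atTop
      (𝓝 ((∫ x, f x ∂μ) - ∫ x in Set.univ, f x ∂μ)) :=
    tendsto_const_nhds.sub htend
  simpa [setIntegral_univ] using this

set_option maxHeartbeats 1000000 in
/-- coercivity of `Lcal` on the constraint set `{Gcal ≤ 0}`. -/
theorem stmt8 (ζ : Measure ℝ) [IsProbabilityMeasure ζ] (loss : ℝ → ℝ) (δ : ℝ)
    (hconv : ConvexOn ℝ Set.univ loss) (hlip : LipschitzFun loss)
    (hmin : argminIsZero loss) (hδ : 1 < δ) (hZ : 0 < ζ {x : ℝ | x ≠ 0}) :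
    ∃ C₁ C₂ : ℝ, 0 < C₁ ∧ 0 < C₂ ∧
      ∀ v : ℝ × ℝ → ℝ, inH ζ v → Gcal ζ δ v ≤ 0 →
        C₁ * hnorm ζ v - C₂ ≤ Lcal ζ loss v := by
  classical
  obtain ⟨c, hc, hlb⟩ := lossLB loss hconv hmin
  obtain ⟨K0, hK⟩ := hlip
  set K : ℝ := (K0 : ℝ) with hK_def
  have hK0 : 0 ≤ K := K0.coe_nonneg
  have hcK : 0 < c + K := by linarith
  set s : ℝ := Real.sqrt (1 - δ⁻¹) with hs_def
  have hδ1 : 0 < 1 - δ⁻¹ := by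
    have h1 : δ⁻¹ < 1 := inv_lt_one_of_one_lt₀ hδ
    linarith
  have hs : 0 < s := Real.sqrt_pos.2 hδ1
  haveI : IsProbabilityMeasure (nu ζ) := by
    unfold nu; infer_instance
  set gauss : Measure ℝ := gaussianReal 0 1 with hgauss_def
  -- choose the Gaussian truncation level M
  have htendG := tail_small (μ := gauss) (fun x => x ^ 2) gauss_sq_integrable
  have hevG : ∀ᶠ n : ℕ in atTop,
      (∫ x in (Metric.closedBall (0:ℝ) n)ᶜ, x ^ 2 ∂gauss) < (s/2)^2 :=
    htendG.eventually_lt_const (by positivity)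
  obtain ⟨M, hM1, hMtail⟩ : ∃ M : ℕ, 1 ≤ M ∧
      (∫ x in (Metric.closedBall (0:ℝ) M)ᶜ, x ^ 2 ∂gauss) < (s/2)^2 := by
    obtain ⟨M, hM⟩ := (hevG.and (eventually_ge_atTop 1)).exists
    exact ⟨M, hM.2, hM.1⟩
  have hM0 : (0:ℝ) < M := by exact_mod_cast hM1
  set κ : ℝ := s / (2 * M) with hκ_def
  have hκ : 0 < κ := by positivity
  set ε : ℝ := (c * κ / 2) / (c + K) with hε_def
  have hε : 0 < ε := by positivity
  -- choose the Z truncation level R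
  have htendZ := tail_small (μ := ζ) (fun _ => (1:ℝ)) (integrable_const 1)
  have hevZ : ∀ᶠ n : ℕ in atTop,
      (∫ _ in (Metric.closedBall (0:ℝ) n)ᶜ, (1:ℝ) ∂ζ) < ε ^ 2 :=
    htendZ.eventually_lt_const (by positivity)
  obtain ⟨R, hRtail⟩ := hevZ.exists
  have hRconv : (∫ _ in (Metric.closedBall (0:ℝ) R)ᶜ, (1:ℝ) ∂ζ)
      = (ζ (Metric.closedBall (0:ℝ) R)ᶜ).toReal := by
    rw [setIntegral_const]; simp; rfl
  set tZ : ℝ := (ζ (Metric.closedBall (0:ℝ) R)ᶜ).toReal with htZ_def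
  have htZ : tZ < ε ^ 2 := by rw [← hRconv]; exact hRtail
  have htZ0 : 0 ≤ tZ := ENNReal.toReal_nonneg
  refine ⟨c * κ / 2, c + (c + K) * R, by positivity, by positivity, ?_⟩
  intro v hv hGc
  -- notation
  set ν : Measure (ℝ × ℝ) := nu ζ with hν_def
  set N : ℝ := hnorm ζ v with hN_def
  have hN0 : 0 ≤ N := Real.sqrt_nonneg _
  set A_G : Set ℝ := (Metric.closedBall (0:ℝ) M)ᶜ with hAG_def
  set A_Z : Set ℝ := (Metric.closedBall (0:ℝ) R)ᶜ with hAZ_def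
  have hAGm : MeasurableSet A_G := Metric.isClosed_closedBall.measurableSet.compl
  have hAZm : MeasurableSet A_Z := Metric.isClosed_closedBall.measurableSet.compl
  set g2 : ℝ × ℝ → ℝ := fun p => A_G.indicator (fun x => |x|) p.1 with hg2_def
  set gZ : ℝ × ℝ → ℝ := fun p => A_Z.indicator (fun _ => (1:ℝ)) p.2 with hgZ_def
  -- measure-preserving projections
  have hfst : MeasurePreserving Prod.fst ν gauss := by
    refine ⟨measurable_fst, ?_⟩
    rw [hν_def]
    unfold nu
    rw [Measure.map_fst_prod]
    simp [hgauss_def]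
  have hsnd : MeasurePreserving Prod.snd ν ζ := by
    refine ⟨measurable_snd, ?_⟩
    rw [hν_def]
    unfold nu
    rw [Measure.map_snd_prod]
    simp [hgauss_def]
  -- membership facts
  have hGgauss : MemLp (fun x : ℝ => x) 2 gauss :=
    (memLp_two_iff_integrable_sq aestronglyMeasurable_id).2 gauss_sq_integrable
  have hGν : MemLp (fun p : ℝ × ℝ => p.1) 2 ν :=
    hGgauss.comp_measurePreserving hfst
  have hvm : AEStronglyMeasurable v ν := hv.aestronglyMeasurable
  have hvabs : MemLp (fun p => |v p|) 2 ν := by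
    simpa [Real.norm_eq_abs] using hv.norm
  have hGabs : MemLp (fun p : ℝ × ℝ => |p.1|) 2 ν := by
    simpa [Real.norm_eq_abs] using hGν.norm
  have hg2m : AEStronglyMeasurable g2 ν :=
    ((measurable_abs.indicator hAGm).comp measurable_fst).aestronglyMeasurable
  have hg2mem : MemLp g2 2 ν := by
    refine MemLp.of_le hGabs hg2m (Eventually.of_forall fun p => ?_)
    by_cases h : p.1 ∈ A_G
    · simp only [g2, Set.indicator_of_mem h, Real.norm_eq_abs, abs_abs]
      exact le_refl _
    · simp only [g2, Set.indicator_of_notMem h, Real.norm_eq_abs]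
      simp [abs_nonneg]
  have hgZm : AEStronglyMeasurable gZ ν :=
    ((measurable_const.indicator hAZm).comp measurable_snd).aestronglyMeasurable
  have hgZmem : MemLp gZ 2 ν := by
    refine MemLp.of_bound hgZm 1 (Eventually.of_forall fun p => ?_)
    simp only [gZ, Real.norm_eq_abs]
    by_cases h : p.2 ∈ A_Z
    · rw [Set.indicator_of_mem h]; simp
    · rw [Set.indicator_of_notMem h]; simp
  -- integrability facts
  have hv_int : Integrable v ν := hv.integrable one_le_two
  have habs_int : Integrable (fun p => |v p|) ν := hv_int.abs
  have hsqv : Integrable (fun p => v p ^ 2) ν := hv.integrable_sq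
  have hsqG : Integrable (fun p : ℝ × ℝ => p.1 ^ 2) ν := hGν.integrable_sq
  have amgm : ∀ a b : ℝ, |a| * |b| ≤ (a ^ 2 + b ^ 2) / 2 := by
    intro a b
    nlinarith [sq_nonneg (|a| - |b|), sq_abs a, sq_abs b]
  have hbd : Integrable (fun p : ℝ × ℝ => (v p ^ 2 + p.1 ^ 2) / 2) ν := by
    simpa [Pi.add_apply] using (hsqv.add hsqG).div_const 2
  have hvG_int : Integrable (fun p => v p * p.1) ν := by
    refine Integrable.mono' hbd
      (hvm.mul hGν.aestronglyMeasurable) (Eventually.of_forall fun p => ?_)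
    rw [Real.norm_eq_abs, abs_mul]
    exact amgm _ _
  have habsg2_int : Integrable (fun p => |v p| * g2 p) ν := by
    refine Integrable.mono' hbd
      (hvabs.aestronglyMeasurable.mul hg2m) (Eventually.of_forall fun p => ?_)
    have hg2le : g2 p ≤ |p.1| := by
      simp only [g2]
      by_cases h : p.1 ∈ A_G
      · rw [Set.indicator_of_mem h]
      · rw [Set.indicator_of_notMem h]; exact abs_nonneg _
    have hg2nn : 0 ≤ g2 p := by
      simp only [g2]
      by_cases h : p.1 ∈ A_G
      · rw [Set.indicator_of_mem h]; exact abs_nonneg _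
      · rw [Set.indicator_of_notMem h]
    rw [Real.norm_eq_abs, abs_of_nonneg (mul_nonneg (abs_nonneg _) hg2nn)]
    have h2 : |v p| * g2 p ≤ |v p| * |p.1| :=
      mul_le_mul_of_nonneg_left hg2le (abs_nonneg _)
    linarith [amgm (v p) p.1]
  have hgZle : ∀ p, 0 ≤ gZ p ∧ gZ p ≤ 1 := by
    intro p
    simp only [gZ]
    by_cases h : p.2 ∈ A_Z
    · rw [Set.indicator_of_mem h]; exact ⟨zero_le_one, le_refl 1⟩
    · rw [Set.indicator_of_notMem h]; exact ⟨le_refl 0, zero_le_one⟩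
  have habsgZ_int : Integrable (fun p => |v p| * gZ p) ν := by
    refine Integrable.mono' habs_int
      (hvabs.aestronglyMeasurable.mul hgZm) (Eventually.of_forall fun p => ?_)
    rw [Real.norm_eq_abs, abs_of_nonneg (mul_nonneg (abs_nonneg _) (hgZle p).1)]
    nlinarith [(hgZle p).1, (hgZle p).2, abs_nonneg (v p)]
  -- Step 1 : constraint gives s * N ≤ ∫ v·G
  have step1 : s * N ≤ ∫ p, v p * p.1 ∂ν := by
    have h1 : N - (∫ p, v p * p.1 ∂ν) / s ≤ 0 := hGc
    have h2 : N ≤ (∫ p, v p * p.1 ∂ν) / s := by linarith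
    calc s * N = N * s := by ring
      _ ≤ ∫ p, v p * p.1 ∂ν := (le_div_iff₀ hs).1 h2
  -- Step 2 : ∫ v·G ≤ M * ∫|v| + N * (s/2)
  have hsqabs : (∫ p, |v p| ^ 2 ∂ν) = ∫ p, v p ^ 2 ∂ν := by
    congr 1; funext p; rw [sq_abs]
  have hg2sq : (∫ p, g2 p ^ 2 ∂ν) = ∫ x in A_G, x ^ 2 ∂gauss := by
    have h1 : ∀ p : ℝ × ℝ, g2 p ^ 2 = A_G.indicator (fun x => x ^ 2) p.1 := by
      intro p
      simp only [g2]
      by_cases h : p.1 ∈ A_G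
      · rw [Set.indicator_of_mem h, Set.indicator_of_mem h, sq_abs]
      · rw [Set.indicator_of_notMem h, Set.indicator_of_notMem h]; ring
    calc (∫ p, g2 p ^ 2 ∂ν) = ∫ p, A_G.indicator (fun x => x ^ 2) p.1 ∂ν := by
          congr 1; funext p; exact h1 p
      _ = ∫ x, A_G.indicator (fun x => x ^ 2) x ∂gauss := by
          rw [← hfst.map_eq]
          exact (integral_map measurable_fst.aemeasurable
            ((measurable_id.pow_const 2).indicator hAGm).aestronglyMeasurable).symm
      _ = ∫ x in A_G, x ^ 2 ∂gauss := integral_indicator hAGm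
  have step2 : (∫ p, v p * p.1 ∂ν) ≤ M * (∫ p, |v p| ∂ν) + N * (s/2) := by
    have hpt : ∀ p : ℝ × ℝ, v p * p.1 ≤ M * |v p| + |v p| * g2 p := by
      intro p
      have h1 : v p * p.1 ≤ |v p| * |p.1| := by
        calc v p * p.1 ≤ |v p * p.1| := le_abs_self _
          _ = |v p| * |p.1| := abs_mul _ _
      by_cases h : p.1 ∈ A_G
      · have : g2 p = |p.1| := by simp only [g2]; rw [Set.indicator_of_mem h]
        rw [this]
        have hMnn : (0:ℝ) ≤ (M:ℝ) * |v p| := mul_nonneg hM0.le (abs_nonneg _)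
        linarith
      · have hg0 : g2 p = 0 := by simp only [g2]; rw [Set.indicator_of_notMem h]
        have hple : |p.1| ≤ M := by
          simp only [A_G, Set.mem_compl_iff, not_not] at h
          simpa [Real.dist_eq] using h
        rw [hg0]
        have h2 : |v p| * |p.1| ≤ |v p| * M :=
          mul_le_mul_of_nonneg_left hple (abs_nonneg _)
        linarith
    have hcs : (∫ p, |v p| * g2 p ∂ν) ≤ N * (s/2) := by
      have h1 := my_cs ν (fun p => |v p|) g2 (fun p => abs_nonneg _)
        (fun p => (by
          simp only [g2]
          by_cases h : p.1 ∈ A_G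
          · rw [Set.indicator_of_mem h]; exact abs_nonneg _
          · rw [Set.indicator_of_notMem h])) hvabs hg2mem
      rw [hsqabs, hg2sq] at h1
      calc (∫ p, |v p| * g2 p ∂ν) ≤ N * Real.sqrt (∫ x in A_G, x ^ 2 ∂gauss) := h1
        _ ≤ N * (s/2) := by
            refine mul_le_mul_of_nonneg_left ?_ hN0
            calc Real.sqrt (∫ x in A_G, x ^ 2 ∂gauss) ≤ Real.sqrt ((s/2)^2) :=
              Real.sqrt_le_sqrt (le_of_lt hMtail)
              _ = s/2 := Real.sqrt_sq (by positivity)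
    calc (∫ p, v p * p.1 ∂ν) ≤ ∫ p, (M * |v p| + |v p| * g2 p) ∂ν :=
          integral_mono hvG_int ((habs_int.const_mul M).add habsg2_int)
            (fun p => hpt p)
      _ = M * (∫ p, |v p| ∂ν) + ∫ p, |v p| * g2 p ∂ν := by
          rw [integral_add (habs_int.const_mul M) habsg2_int, integral_const_mul]
      _ ≤ M * (∫ p, |v p| ∂ν) + N * (s/2) := by linarith [hcs]
  -- combine: κ * N ≤ ∫ |v|
  have cIab : κ * N ≤ ∫ p, |v p| ∂ν := by
    have h1 : (s/2) * N ≤ M * (∫ p, |v p| ∂ν) := by linarith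
    have h2 : κ * N = s * N / (2 * M) := by rw [hκ_def]; ring
    rw [h2]
    rw [div_le_iff₀ (by positivity)]
    linarith
  -- Step 3 : pointwise lower bound on the loss difference
  have hlip' : ∀ a b : ℝ, |loss a - loss b| ≤ K * |a - b| := by
    intro a b
    have := hK.dist_le_mul a b
    rwa [Real.dist_eq, Real.dist_eq] at this
  have hpt3 : ∀ p : ℝ × ℝ,
      c * |v p| - (c + K) * (|v p| * gZ p) - (c + (c + K) * R)
        ≤ loss (v p + p.2) - loss p.2 := by
    intro p
    have hRnn : (0:ℝ) ≤ R := Nat.cast_nonneg R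
    by_cases h : p.2 ∈ A_Z
    · have hgZ1 : gZ p = 1 := by simp only [gZ]; rw [Set.indicator_of_mem h]
      have hl := hlip' (v p + p.2) p.2
      simp only [add_sub_cancel_right] at hl
      have hl2 : -(K * |v p|) ≤ loss (v p + p.2) - loss p.2 := neg_le_of_abs_le hl
      rw [hgZ1]
      have h3 : (0:ℝ) ≤ (c + K) * R := mul_nonneg hcK.le hRnn
      linarith
    · have hgZ0 : gZ p = 0 := by simp only [gZ]; rw [Set.indicator_of_notMem h]
      have hpR : |p.2| ≤ R := by
        simp only [A_Z, Set.mem_compl_iff, not_not] at h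
        simpa [Real.dist_eq] using h
      have b1 : loss 0 + c * (|v p + p.2| - 1) ≤ loss (v p + p.2) := hlb _
      have habs2 : |v p| - |p.2| ≤ |v p + p.2| := by
        have := abs_add_le (v p + p.2) (-p.2)
        simp only [add_neg_cancel_right, abs_neg] at this
        linarith
      have b2 : |loss p.2 - loss 0| ≤ K * |p.2| := by
        have := hlip' p.2 0
        simpa using this
      have b2' : loss p.2 - loss 0 ≤ K * |p.2| := le_of_abs_le b2
      have f1 : c * (|v p| - |p.2|) ≤ c * |v p + p.2| :=
        mul_le_mul_of_nonneg_left habs2 hc.le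
      have f2 : c * |p.2| ≤ c * R := mul_le_mul_of_nonneg_left hpR hc.le
      have f3 : K * |p.2| ≤ K * R := mul_le_mul_of_nonneg_left hpR hK0
      rw [hgZ0]
      linarith
  -- Step 4 : integrate the pointwise bound
  have hsnd_aesm : AEStronglyMeasurable (fun p : ℝ × ℝ => p.2) ν :=
    measurable_snd.aestronglyMeasurable
  have hloss_int : Integrable (fun p => loss (v p + p.2) - loss p.2) ν := by
    refine Integrable.mono' (habs_int.const_mul K)
      ((hK.continuous.comp_aestronglyMeasurable (hvm.add hsnd_aesm)).sub
        (hK.continuous.comp_aestronglyMeasurable hsnd_aesm))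
      (Eventually.of_forall fun p => ?_)
    rw [Real.norm_eq_abs]
    have := hlip' (v p + p.2) p.2
    simp only [add_sub_cancel_right] at this
    exact this
  have step4 : c * (∫ p, |v p| ∂ν) - (c + K) * (∫ p, |v p| * gZ p ∂ν)
      - (c + (c + K) * R) ≤ Lcal ζ loss v := by
    have i12 : Integrable (fun p => c * |v p| - (c + K) * (|v p| * gZ p)) ν :=
      (habs_int.const_mul c).sub (habsgZ_int.const_mul (c + K))
    have hLHS_int : Integrable
        (fun p => c * |v p| - (c + K) * (|v p| * gZ p) - (c + (c + K) * R)) ν :=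
      i12.sub (integrable_const _)
    calc c * (∫ p, |v p| ∂ν) - (c + K) * (∫ p, |v p| * gZ p ∂ν) - (c + (c + K) * R)
        = ∫ p, (c * |v p| - (c + K) * (|v p| * gZ p) - (c + (c + K) * R)) ∂ν := by
          rw [integral_sub i12 (integrable_const _),
            integral_sub (habs_int.const_mul c) (habsgZ_int.const_mul (c + K)),
            integral_const_mul, integral_const_mul, integral_const]
          simp
      _ ≤ ∫ p, (loss (v p + p.2) - loss p.2) ∂ν :=
          integral_mono hLHS_int hloss_int (fun p => hpt3 p)
      _ = Lcal ζ loss v := rfl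
  -- Step 5 : ∫ |v| gZ ≤ N * ε
  have hgZsq : (∫ p, gZ p ^ 2 ∂ν) = tZ := by
    have h1 : ∀ p : ℝ × ℝ, gZ p ^ 2 = A_Z.indicator (fun _ => (1:ℝ)) p.2 := by
      intro p
      simp only [gZ]
      by_cases h : p.2 ∈ A_Z
      · rw [Set.indicator_of_mem h]; norm_num
      · rw [Set.indicator_of_notMem h]; norm_num
    calc (∫ p, gZ p ^ 2 ∂ν) = ∫ p, A_Z.indicator (fun _ => (1:ℝ)) p.2 ∂ν := by
          congr 1; funext p; exact h1 p
      _ = ∫ x, A_Z.indicator (fun _ => (1:ℝ)) x ∂ζ := by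
          rw [← hsnd.map_eq]
          exact (integral_map measurable_snd.aemeasurable
            ((measurable_const.indicator hAZm)).aestronglyMeasurable).symm
      _ = tZ := by
          rw [integral_indicator_const (1:ℝ) hAZm]
          simp [htZ_def]; rfl
  have step5 : (∫ p, |v p| * gZ p ∂ν) ≤ N * ε := by
    have h1 := my_cs ν (fun p => |v p|) gZ (fun p => abs_nonneg _)
      (fun p => (hgZle p).1) hvabs hgZmem
    rw [hsqabs, hgZsq] at h1
    calc (∫ p, |v p| * gZ p ∂ν) ≤ N * Real.sqrt tZ := h1
      _ ≤ N * ε := by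
          refine mul_le_mul_of_nonneg_left ?_ hN0
          calc Real.sqrt tZ ≤ Real.sqrt (ε ^ 2) := Real.sqrt_le_sqrt (le_of_lt htZ)
            _ = ε := Real.sqrt_sq hε.le
  -- conclusion
  have hεeq : (c + K) * ε = c * κ / 2 := by
    rw [hε_def]
    field_simp
  have h6 : (c + K) * (∫ p, |v p| * gZ p ∂ν) ≤ (c * κ / 2) * N := by
    calc (c + K) * (∫ p, |v p| * gZ p ∂ν) ≤ (c + K) * (N * ε) :=
          mul_le_mul_of_nonneg_left step5 hcK.le
      _ = (c * κ / 2) * N := by rw [← hεeq]; ring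
  have h7 : c * (κ * N) ≤ c * (∫ p, |v p| ∂ν) :=
    mul_le_mul_of_nonneg_left cIab hc.le
  linarith [step4, h6, h7]

end
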